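/- Let l ≥ 1 be an integer and consider the transmission multi-rate sampled-data (TMS) system Φ̃_s = Φ_s^l, Ψ̃_s = (Σ_{c=0}^{l−1} Φ_s^c)·(Δ ⊗ 𝓑(h)). Assume: (1) for every complex eigenvalue θ of Φ_s, Σ_{c=0}^{l−1} θ^c ≠ 0; (2) every nonzero complex row vector η ∈ ℂ^{1×Nn} that is a left eigenvector of Φ_s^l (i.e. η·Φ_s^l = μ·η for some μ ∈ ℂ) satisfies η·(Δ ⊗ 𝓑(h)) ≠ 0. Then the pair (Φ̃_s, Ψ̃_s) is controllable. -/

import Mathlib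

open Matrix
open scoped Kronecker

/-- Entrywise complexification of a real matrix. -/
noncomputable def cpx {a b : Type*} (M : Matrix a b ℝ) : Matrix a b ℂ :=
  M.map (Complex.ofReal)

/-- The matrix exponential `e^{M}`. -/
noncomputable def mexp {q : Type*} [Fintype q] [DecidableEq q]
    (M : Matrix q q ℝ) : Matrix q q ℝ :=
  NormedSpace.exp M

/-- The entrywise integral `∫₀ʰ e^{Aτ} dτ`. -/
noncomputable def intExp {q : Type*} [Fintype q] [DecidableEq q]
    (A : Matrix q q ℝ) (h : ℝ) : Matrix q q ℝ :=
  Matrix.of fun i j => ∫ τ in (0:ℝ)..h, (NormedSpace.exp (τ • A)) i j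

/-- `θ` is an eigenvalue of the complex square matrix `M`. -/
def IsEig {q : Type*} [Fintype q] [DecidableEq q] (M : Matrix q q ℂ) (θ : ℂ) : Prop :=
  (θ • (1 : Matrix q q ℂ) - M).det = 0

/-- PBH condition for a pair of complex matrices: for every `s ∈ ℂ`, the only row
vector `v` with `v (sI - M) = 0` and `v G = 0` is `v = 0`. -/
def PBH {q r : Type*} [Fintype q] [DecidableEq q] [Fintype r]
    (M : Matrix q q ℂ) (G : Matrix q r ℂ) : Prop :=
  ∀ (s : ℂ) (v : q → ℂ), v ᵥ* (s • (1 : Matrix q q ℂ) - M) = 0 → v ᵥ* G = 0 → v = 0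

/-- Controllability of a discrete-time linear system `x⁺ = F x + G u`:
every state can be steered to the origin in finitely many steps. -/
def Controllable {q r : Type*} [Fintype q] [DecidableEq q] [Fintype r]
    (F : Matrix q q ℝ) (G : Matrix q r ℝ) : Prop :=
  ∀ x : q → ℝ, ∃ (k : ℕ) (u : Fin k → r → ℝ),
    (F ^ k) *ᵥ x + ∑ j : Fin k, (F ^ (k - 1 - (j : ℕ))) *ᵥ (G *ᵥ u j) = 0

/-- `𝓑(h) = (∫₀ʰ e^{Aτ} dτ)·B`. -/
noncomputable def sampB {n p : ℕ} (A : Matrix (Fin n) (Fin n) ℝ)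
    (B : Matrix (Fin n) (Fin p) ℝ) (h : ℝ) : Matrix (Fin n) (Fin p) ℝ :=
  intExp A h * B

/-- `𝓗(h) = (∫₀ʰ e^{Aτ} dτ)·H·C`. -/
noncomputable def sampH {n m : ℕ} (A : Matrix (Fin n) (Fin n) ℝ)
    (H : Matrix (Fin n) (Fin m) ℝ) (C : Matrix (Fin m) (Fin n) ℝ) (h : ℝ) :
    Matrix (Fin n) (Fin n) ℝ :=
  intExp A h * H * C

/-- `Φ_s = I_N ⊗ e^{Ah} + W ⊗ 𝓗(h)`. -/
noncomputable def Phis {n m N : ℕ} (A : Matrix (Fin n) (Fin n) ℝ)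
    (H : Matrix (Fin n) (Fin m) ℝ) (C : Matrix (Fin m) (Fin n) ℝ)
    (W : Matrix (Fin N) (Fin N) ℝ) (h : ℝ) :
    Matrix (Fin N × Fin n) (Fin N × Fin n) ℝ :=
  (1 : Matrix (Fin N) (Fin N) ℝ) ⊗ₖ mexp (h • A) + W ⊗ₖ sampH A H C h

/-- `E_λ = e^{Ah} + λ·𝓗(h)` (complexified). -/
noncomputable def Emat {n m : ℕ} (A : Matrix (Fin n) (Fin n) ℝ)
    (H : Matrix (Fin n) (Fin m) ℝ) (C : Matrix (Fin m) (Fin n) ℝ)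
    (h : ℝ) (lam : ℂ) : Matrix (Fin n) (Fin n) ℂ :=
  cpx (mexp (h • A)) + lam • cpx (sampH A H C h)

section AuxLemmas

variable {q r : Type*} [Fintype q] [DecidableEq q] [Fintype r]

lemma cpx_mul (M : Matrix q q ℝ) (P : Matrix q r ℝ) :
    cpx (M * P) = cpx M * cpx P := by
  unfold cpx
  exact Matrix.map_mul (f := Complex.ofRealHom)

lemma cpx_one : cpx (1 : Matrix q q ℝ) = 1 := by
  unfold cpx
  exact Matrix.map_one _ (map_zero Complex.ofRealHom) (map_one Complex.ofRealHom)

lemma cpx_pow (M : Matrix q q ℝ) (k : ℕ) : cpx (M ^ k) = cpx M ^ k := by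
  induction k with
  | zero => simpa using cpx_one
  | succ k ih => rw [pow_succ, pow_succ, cpx_mul, ih]

lemma cpx_sum {ι : Type*} (s : Finset ι) (f : ι → Matrix q r ℝ) :
    cpx (∑ i ∈ s, f i) = ∑ i ∈ s, cpx (f i) := by
  have hrw : ∀ (M : Matrix q r ℝ),
      cpx M = Complex.ofRealHom.toAddMonoidHom.mapMatrix M := fun _ => rfl
  simp only [hrw]
  exact map_sum _ f s

lemma cpx_vecMul (v : q → ℝ) (M : Matrix q r ℝ) :
    (fun i => (v i : ℂ)) ᵥ* cpx M = fun j => ((v ᵥ* M) j : ℂ) := by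
  funext j
  simp [cpx, Matrix.vecMul, dotProduct]

/-- Every power of `F` lies in the span of the first `card q` powers. -/
lemma pow_mem_span_pow (F : Matrix q q ℝ) [Nonempty q] (j : ℕ) :
    F ^ j ∈ Submodule.span ℝ
      (Set.range fun i : Fin (Fintype.card q) => F ^ (i : ℕ)) := by
  set d := Fintype.card q with hdd
  have hd1 : 1 ≤ d := Fintype.card_pos
  induction j using Nat.strong_induction_on with
  | _ j ih =>
    by_cases hj : j < d
    · exact Submodule.subset_span ⟨⟨j, hj⟩, rfl⟩
    · push_neg at hj
      have hcoeff : F.charpoly.coeff d = 1 := by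
        have hm := F.charpoly_monic
        rw [Polynomial.Monic, Polynomial.leadingCoeff,
          F.charpoly_natDegree_eq_dim] at hm
        exact hm
      have hFd : F ^ d = ∑ i ∈ Finset.range d, (-(F.charpoly.coeff i)) • F ^ i := by
        have h0 := F.aeval_self_charpoly
        rw [Polynomial.aeval_eq_sum_range, F.charpoly_natDegree_eq_dim,
          Finset.sum_range_succ, hcoeff, one_smul] at h0
        have h1 : F ^ d = -∑ i ∈ Finset.range d, F.charpoly.coeff i • F ^ i := by
          linear_combination (norm := abel) h0
        rw [h1, ← Finset.sum_neg_distrib]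
        exact Finset.sum_congr rfl fun i _ => (neg_smul _ _).symm
      have hrw : F ^ j = ∑ i ∈ Finset.range d,
          (-(F.charpoly.coeff i)) • F ^ (j - d + i) := by
        have : F ^ j = F ^ (j - d) * F ^ d := by
          rw [← pow_add]; congr 1; omega
        rw [this, hFd, Finset.mul_sum]
        exact Finset.sum_congr rfl fun i _ => by
          rw [Matrix.mul_smul, ← pow_add]
      rw [hrw]
      refine Submodule.sum_mem _ fun i hi => Submodule.smul_mem _ _ ?_
      have : j - d + i < j := by
        have := Finset.mem_range.mp hi; omega
      exact ih _ this

end AuxLemmas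

lemma controllable_of_no_left_eig {q r : Type*} [Fintype q] [DecidableEq q]
    [Nonempty q] [Fintype r]
    (F : Matrix q q ℝ) (G : Matrix q r ℝ)
    (hpbh : ∀ η : q → ℂ, η ≠ 0 → (∃ μ : ℂ, η ᵥ* cpx F = μ • η) →
      η ᵥ* cpx G ≠ 0) :
    Controllable F G := by
  classical
  set d := Fintype.card q with hdd
  have hd1 : 1 ≤ d := Fintype.card_pos
  set K : Matrix q (Fin d × r) ℝ :=
    Matrix.of (fun a js => (F ^ (js.1 : ℕ) * G) a js.2) with hK
  -- Step 1 : the controllability matrix has full range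
  have hrange : LinearMap.range K.mulVecLin = ⊤ := by
    by_contra hne
    -- otherwise there is a nonzero real left-annihilator of K
    have hker : LinearMap.ker (Kᵀ.mulVecLin) ≠ ⊥ := by
      intro hbot
      apply hne
      have hinj : Function.Injective Kᵀ.mulVecLin := LinearMap.ker_eq_bot.mp hbot
      have hrkT : Kᵀ.rank = d := by
        rw [Matrix.rank, LinearMap.finrank_range_of_inj hinj]
        simp [hdd]
      have hrk : K.rank = d := by rw [← Matrix.rank_transpose, hrkT]
      apply Submodule.eq_top_of_finrank_eq
      rw [← Matrix.rank] at *
      rw [hrk]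
      simp [hdd]
    obtain ⟨η₀, hη₀mem, hη₀⟩ := Submodule.exists_mem_ne_zero_of_ne_bot hker
    have hη₀K : η₀ ᵥ* K = 0 := by
      have : Kᵀ *ᵥ η₀ = 0 := hη₀mem
      rwa [Matrix.mulVec_transpose] at this
    -- η₀ annihilates F^i * G for all i < d
    have hfin : ∀ i : Fin d, η₀ ᵥ* (F ^ (i : ℕ) * G) = 0 := by
      intro i
      funext s
      have := congrFun hη₀K (i, s)
      simpa [Matrix.vecMul, dotProduct, hK] using this
    -- extend to all powers via Cayley–Hamilton
    have hall : ∀ j : ℕ, η₀ ᵥ* (F ^ j * G) = 0 := by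
      intro j
      let L : Matrix q q ℝ →ₗ[ℝ] (r → ℝ) :=
        { toFun := fun M => η₀ ᵥ* (M * G)
          map_add' := by
            intro M P
            show η₀ ᵥ* ((M + P) * G) = _
            rw [Matrix.add_mul, Matrix.vecMul_add]
          map_smul' := by
            intro c M
            show η₀ ᵥ* ((c • M) * G) = _
            funext s
            simp [Matrix.smul_mul, Matrix.vecMul, dotProduct,
              Finset.mul_sum, mul_left_comm] }
      have hspan := pow_mem_span_pow F j
      have hle : Submodule.span ℝ
          (Set.range fun i : Fin (Fintype.card q) => F ^ (i : ℕ)) ≤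
          LinearMap.ker L := by
        rw [Submodule.span_le]
        rintro _ ⟨i, rfl⟩
        exact hfin i
      exact hle hspan
    -- complexify and find an eigenvector inside the annihilator space
    set Fc := cpx F with hFc
    set Gc := cpx G with hGc
    set Wc : Submodule ℂ (q → ℂ) :=
      ⨅ j : ℕ, LinearMap.ker ((Fc ^ j * Gc).vecMulLinear) with hWc
    have hWmem : ∀ η : q → ℂ, η ∈ Wc ↔ ∀ j : ℕ, η ᵥ* (Fc ^ j * Gc) = 0 := by
      intro η
      simp [hWc, Submodule.mem_iInf, LinearMap.mem_ker, Matrix.vecMulLinear_apply]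
    set η₀c : q → ℂ := fun i => ((η₀ i : ℝ) : ℂ) with hη₀c
    have hη₀cW : η₀c ∈ Wc := by
      rw [hWmem]
      intro j
      have : Fc ^ j * Gc = cpx (F ^ j * G) := by
        rw [cpx_mul, cpx_pow]
      rw [this, hη₀c, cpx_vecMul, hall j]
      funext s
      simp
    have hη₀cne : η₀c ≠ 0 := by
      intro hc
      apply hη₀
      funext i
      have := congrFun hc i
      simpa [hη₀c] using this
    haveI : Nontrivial Wc :=
      nontrivial_of_ne (⟨η₀c, hη₀cW⟩ : Wc) 0 (by
        intro hcc
        exact hη₀cne (by simpa using congrArg Subtype.val hcc))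
    have hstab : ∀ η ∈ Wc, Fc.vecMulLinear η ∈ Wc := by
      intro η hη
      rw [hWmem] at hη ⊢
      intro j
      rw [Matrix.vecMulLinear_apply, Matrix.vecMul_vecMul, ← Matrix.mul_assoc,
        ← pow_succ']
      exact hη (j + 1)
    set T : Module.End ℂ Wc := (Fc.vecMulLinear).restrict hstab with hT
    obtain ⟨μ, hμ⟩ := Module.End.exists_eigenvalue T
    obtain ⟨w, hw⟩ := hμ.exists_hasEigenvector
    have hηne : (w : q → ℂ) ≠ 0 := fun hcc => hw.2 (by exact_mod_cast Subtype.ext hcc)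
    have heig : (w : q → ℂ) ᵥ* Fc = μ • (w : q → ℂ) := by
      have h1 := hw.apply_eq_smul
      have h2 := congrArg Subtype.val h1
      simpa [hT, LinearMap.restrict_apply, Matrix.vecMulLinear_apply] using h2
    have hG0 : (w : q → ℂ) ᵥ* Gc = 0 := by
      have := (hWmem _).mp w.2 0
      simpa using this
    exact hpbh _ hηne ⟨μ, heig⟩ hG0
  -- Step 2 : construct the steering inputs
  intro x
  have hx : -(F ^ d *ᵥ x) ∈ LinearMap.range K.mulVecLin := by
    rw [hrange]; trivial
  obtain ⟨w, hw⟩ := hx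
  refine ⟨d, fun j s => w (⟨d - 1 - (j : ℕ), by omega⟩, s), ?_⟩
  have hKw : K.mulVecLin w = ∑ i : Fin d, (F ^ (i : ℕ) * G) *ᵥ (fun s => w (i, s)) := by
    funext a
    simp [Matrix.mulVecLin_apply, Matrix.mulVec, dotProduct,
      Fintype.sum_prod_type, hK, Finset.sum_apply]
  let σ : Equiv.Perm (Fin d) :=
    ⟨fun j => ⟨d - 1 - (j : ℕ), by omega⟩, fun j => ⟨d - 1 - (j : ℕ), by omega⟩,
      fun j => by ext; simp; omega, fun j => by ext; simp; omega⟩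
  have hsum : ∑ j : Fin d, F ^ (d - 1 - (j : ℕ)) *ᵥ
      (G *ᵥ fun s => w (⟨d - 1 - (j : ℕ), by omega⟩, s)) =
      ∑ i : Fin d, (F ^ (i : ℕ) * G) *ᵥ (fun s => w (i, s)) := by
    rw [← Equiv.sum_comp σ (fun i : Fin d => (F ^ (i : ℕ) * G) *ᵥ (fun s => w (i, s)))]
    refine Finset.sum_congr rfl fun j _ => ?_
    rw [Matrix.mulVec_mulVec]
    rfl
  rw [hsum, ← hKw, hw]
  simp

lemma det_list_prod {q : Type*} [Fintype q] [DecidableEq q]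
    (l : List (Matrix q q ℂ)) : l.prod.det = (l.map Matrix.det).prod := by
  induction l with
  | nil => simp
  | cons a t ih => simp [Matrix.det_mul, ih]

lemma det_geomSum_ne_zero {q : Type*} [Fintype q] [DecidableEq q]
    (Φ : Matrix q q ℂ) (l : ℕ) (hl : 1 ≤ l)
    (h1 : ∀ θ : ℂ, IsEig Φ θ → ∑ c ∈ Finset.range l, θ ^ c ≠ 0) :
    (∑ c ∈ Finset.range l, Φ ^ c).det ≠ 0 := by
  classical
  set P : Polynomial ℂ := ∑ c ∈ Finset.range l, Polynomial.X ^ c with hP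
  have hPc0 : P.coeff 0 = 1 := by
    rw [hP, Polynomial.finset_sum_coeff]
    rw [Finset.sum_eq_single 0]
    · simp
    · intro b _ hb; simp [Polynomial.coeff_X_pow, hb.symm]
    · intro h0; exact absurd (Finset.mem_range.mpr hl) h0
  have hPne : P ≠ 0 := fun hc => by simp [hc] at hPc0
  have haev : (Polynomial.aeval Φ) P = ∑ c ∈ Finset.range l, Φ ^ c := by
    rw [hP, map_sum]
    exact Finset.sum_congr rfl fun c _ => by rw [Polynomial.aeval_X_pow]
  have hsplit : P.Splits := IsAlgClosed.splits P
  have hfact := hsplit.eq_prod_roots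
  set L : List ℂ := P.roots.toList with hL
  have hmemL : ∀ ρ, ρ ∈ L ↔ ρ ∈ P.roots := fun ρ => Multiset.mem_toList
  have hfactL : P = Polynomial.C P.leadingCoeff *
      (L.map fun a => Polynomial.X - Polynomial.C a).prod := by
    conv_lhs => rw [hfact,
      show P.roots = (L : Multiset ℂ) from (Multiset.coe_toList _).symm]
    rw [Multiset.map_coe, Multiset.prod_coe]
  have hdet : (∑ c ∈ Finset.range l, Φ ^ c).det =
      P.leadingCoeff ^ Fintype.card q *
        ((L.map fun ρ => (Φ - ρ • (1 : Matrix q q ℂ)).det)).prod := by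
    rw [← haev]
    conv_lhs => rw [hfactL]
    rw [_root_.map_mul, map_list_prod, Matrix.det_mul]
    congr 1
    · rw [Polynomial.aeval_C, Algebra.algebraMap_eq_smul_one, Matrix.det_smul,
        Matrix.det_one, mul_one]
    · rw [det_list_prod, List.map_map, List.map_map]
      refine congrArg List.prod (List.map_congr_left fun ρ _ => ?_)
      simp [Function.comp, Polynomial.aeval_X, Polynomial.aeval_C,
        Algebra.algebraMap_eq_smul_one, sub_eq_add_neg]
  rw [hdet]
  apply mul_ne_zero
  · exact pow_ne_zero _ (Polynomial.leadingCoeff_ne_zero.mpr hPne)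
  · apply List.prod_ne_zero
    intro hmem
    rw [List.mem_map] at hmem
    obtain ⟨ρ, hρ, hρ0⟩ := hmem
    have hroot : P.eval ρ = 0 :=
      Polynomial.isRoot_of_mem_roots ((hmemL ρ).mp hρ)
    have hsum0 : ∑ c ∈ Finset.range l, ρ ^ c = 0 := by
      rw [hP] at hroot
      simpa [Polynomial.eval_finset_sum] using hroot
    have heig : IsEig Φ ρ := by
      unfold IsEig
      have : ρ • (1 : Matrix q q ℂ) - Φ = -(Φ - ρ • 1) := by rw [neg_sub]
      rw [this, Matrix.det_neg, hρ0, mul_zero]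
    exact h1 ρ heig hsum0


theorem stmt18
    (n m p N : ℕ) (hn : 0 < n) (hm : 0 < m) (hp : 0 < p) (hN : 0 < N)
    (h : ℝ) (hh : 0 < h)
    (A : Matrix (Fin n) (Fin n) ℝ) (B : Matrix (Fin n) (Fin p) ℝ)
    (C : Matrix (Fin m) (Fin n) ℝ) (H : Matrix (Fin n) (Fin m) ℝ)
    (W : Matrix (Fin N) (Fin N) ℝ)
    (δ : Fin N → ℝ) (hδ : ∀ i, δ i = 0 ∨ δ i = 1)
    (l : ℕ) (hl : 1 ≤ l)
    (h1 : ∀ θ : ℂ, IsEig (cpx (Phis A H C W h)) θ → ∑ c ∈ Finset.range l, θ ^ c ≠ 0)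
    (h2 : ∀ η : Fin N × Fin n → ℂ, η ≠ 0 →
      (∃ μ : ℂ, η ᵥ* (cpx (Phis A H C W h) ^ l) = μ • η) →
      η ᵥ* cpx (Matrix.diagonal δ ⊗ₖ sampB A B h) ≠ 0) :
    Controllable (Phis A H C W h ^ l)
      ((∑ c ∈ Finset.range l, Phis A H C W h ^ c) *
        (Matrix.diagonal δ ⊗ₖ sampB A B h)) := by
  classical
  haveI : Nonempty (Fin N × Fin n) := ⟨⟨⟨0, hN⟩, ⟨0, hn⟩⟩⟩
  set Φ := Phis A H C W h with hΦ
  set Ψ := Matrix.diagonal δ ⊗ₖ sampB A B h with hΨ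
  apply controllable_of_no_left_eig
  intro η hηne hex hcontra
  obtain ⟨μ, hμ⟩ := hex
  rw [cpx_pow] at hμ
  have hcpxS : cpx (∑ c ∈ Finset.range l, Φ ^ c) =
      ∑ c ∈ Finset.range l, cpx Φ ^ c := by
    rw [cpx_sum]
    exact Finset.sum_congr rfl fun c _ => cpx_pow Φ c
  have hdetS : (∑ c ∈ Finset.range l, cpx Φ ^ c).det ≠ 0 :=
    det_geomSum_ne_zero (cpx Φ) l hl h1
  set Sc := ∑ c ∈ Finset.range l, cpx Φ ^ c with hSc
  set ζ := η ᵥ* Sc with hζ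
  have hζne : ζ ≠ 0 := by
    intro hz
    apply hηne
    have hu : IsUnit Sc.det := isUnit_iff_ne_zero.mpr hdetS
    have h3 : (η ᵥ* Sc) ᵥ* Sc⁻¹ = 0 := by rw [← hζ, hz, Matrix.zero_vecMul]
    rwa [Matrix.vecMul_vecMul, Matrix.mul_nonsing_inv _ hu,
      Matrix.vecMul_one] at h3
  have hcomm : Sc * cpx Φ ^ l = cpx Φ ^ l * Sc := by
    rw [hSc, Finset.sum_mul, Finset.mul_sum]
    exact Finset.sum_congr rfl fun c _ => by
      rw [← pow_add, ← pow_add, add_comm]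
  have hζeig : ζ ᵥ* (cpx Φ ^ l) = μ • ζ := by
    rw [hζ, Matrix.vecMul_vecMul, hcomm, ← Matrix.vecMul_vecMul, hμ,
      Matrix.smul_vecMul]
  have h4 := h2 ζ hζne ⟨μ, hζeig⟩
  apply h4
  have h5 : Sc * cpx Ψ = cpx ((∑ c ∈ Finset.range l, Φ ^ c) * Ψ) := by
    rw [cpx_mul, hcpxS]
  rw [hζ, Matrix.vecMul_vecMul, h5]
  exact hcontra
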